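/- Let Ψ : (0,∞) → (0,∞) be a continuous increasing bijection, and suppose there exist constants 1 < β₁ ≤ β₂ and C₁ > 1 such that C₁⁻¹ (R/r)^{β₁} ≤ Ψ(R)/Ψ(r) ≤ C₁ (R/r)^{β₂} for all 0 < r ≤ R. Define Φ(s) = sup_{r>0} (s/r − 1/Ψ(r)). Then there exists C₂ > 0 such that C₂⁻¹ (S/s)^{β₂/(β₂−1)} ≤ Φ(S)/Φ(s) ≤ C₂ (S/s)^{β₁/(β₁−1)} for all 0 < s ≤ S. -/

import Mathlib

open Metric Set Filter

/-- `c` is an ε-chain of length `N` from `x` to `y`. -/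
def IsEpsChain {X : Type*} [MetricSpace X] (ε : ℝ) (x y : X) (N : ℕ) (c : ℕ → X) : Prop :=
  c 0 = x ∧ c N = y ∧ ∀ i < N, dist (c i) (c (i + 1)) < ε

/-- The ε-chain distance `d_ε(x,y)`: infimum of chain lengths, `∞` if no chain exists. -/
noncomputable def chainDist {X : Type*} [MetricSpace X] (ε : ℝ) (x y : X) : ENNReal :=
  ⨅ p : {p : ℕ × (ℕ → X) // IsEpsChain ε x y p.1 p.2},
    ∑ i ∈ Finset.range p.1.1, ENNReal.ofReal (dist (p.1.2 i) (p.1.2 (i + 1)))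

/-- `N_ε(x,y)`: minimal number of steps of an ε-chain from `x` to `y`. -/
noncomputable def chainCount {X : Type*} [MetricSpace X] (ε : ℝ) (x y : X) : ℕ :=
  sInf {N | ∃ c : ℕ → X, IsEpsChain ε x y N c}

/-- The Legendre-type transform `Φ(s) = sup_{r>0} (s/r − 1/Ψ(r))`. -/
noncomputable def PhiOf (Ψ : ℝ → ℝ) (s : ℝ) : ℝ :=
  sSup {v | ∃ r > (0 : ℝ), v = s / r - 1 / Ψ r}


namespace Stmt6Aux

lemma young_aux {β s c x : ℝ} (hβ : 1 < β) (hs : 0 < s) (hc : 0 < c) (hx : 0 < x) :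
    s * x - c * x ^ β ≤ s ^ (β / (β - 1)) / c ^ (1 / (β - 1)) := by
  have hβ1 : (0:ℝ) < β - 1 := by linarith
  have hγ : (0:ℝ) < 1 / (β - 1) := by positivity
  have hxβ : x ^ β = x ^ (β - 1) * x := by
    have h := Real.rpow_add hx (β - 1) 1
    rw [Real.rpow_one, sub_add_cancel] at h
    exact h
  by_cases h : s ≤ c * x ^ (β - 1)
  · have h1 : s * x ≤ c * x ^ β := by
      rw [hxβ, ← mul_assoc]
      exact mul_le_mul_of_nonneg_right h hx.le
    have : (0:ℝ) ≤ s ^ (β / (β - 1)) / c ^ (1 / (β - 1)) := by positivity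
    linarith
  · push_neg at h
    have h2 : x ^ (β - 1) < s / c := by
      rw [lt_div_iff₀ hc]; linarith [mul_comm c (x ^ (β - 1))]
    have h3 : x < (s / c) ^ (1 / (β - 1)) := by
      have := Real.rpow_lt_rpow (by positivity) h2 hγ
      rwa [← Real.rpow_mul hx.le, mul_one_div, div_self hβ1.ne', Real.rpow_one] at this
    have h4 : s * x ≤ s * ((s / c) ^ (1 / (β - 1))) := by nlinarith
    have h5 : s * ((s / c) ^ (1 / (β - 1))) = s ^ (β / (β - 1)) / c ^ (1 / (β - 1)) := by
      rw [Real.div_rpow hs.le hc.le, show β / (β - 1) = 1 + 1 / (β - 1) by field_simp; ring,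
        Real.rpow_add hs, Real.rpow_one, mul_div_assoc]
    have h6 : 0 ≤ c * x ^ β := by positivity
    linarith



section
variable {Ψ : ℝ → ℝ} {β₁ β₂ C₁ : ℝ}
  (hβ₁ : 1 < β₁) (hβ : β₁ ≤ β₂) (hC₁ : 1 < C₁)
  (hpos : ∀ r > (0 : ℝ), 0 < Ψ r)
  (hreg : ∀ r R : ℝ, 0 < r → r ≤ R →
      C₁⁻¹ * (R / r) ^ β₁ ≤ Ψ R / Ψ r ∧ Ψ R / Ψ r ≤ C₁ * (R / r) ^ β₂)

include hβ₁ hC₁ hpos hreg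

lemma phi_bdd {s : ℝ} (hs : 0 < s) :
    BddAbove {v | ∃ r > (0 : ℝ), v = s / r - 1 / Ψ r} := by
  have hΨ1 : 0 < Ψ 1 := hpos 1 one_pos
  set c : ℝ := (C₁ * Ψ 1)⁻¹ with hc
  have hcpos : 0 < c := by positivity
  refine ⟨s + s ^ (β₁ / (β₁ - 1)) / c ^ (1 / (β₁ - 1)), ?_⟩
  rintro v ⟨r, hr, rfl⟩
  have hΨr : 0 < Ψ r := hpos r hr
  rcases le_or_gt 1 r with h1 | h1
  · have : s / r ≤ s := by
      rw [div_le_iff₀ (by linarith)]; nlinarith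
    have h2 : 0 < 1 / Ψ r := by positivity
    have h3 : (0:ℝ) ≤ s ^ (β₁ / (β₁ - 1)) / c ^ (1 / (β₁ - 1)) := by positivity
    linarith
  · -- r < 1 : use 1/Ψ r ≥ c * (1/r)^β₁
    have hb := (hreg r 1 hr h1.le).1
    rw [le_div_iff₀ hΨr] at hb
    set x : ℝ := 1 / r with hxdef
    have hx : 0 < x := by positivity
    have key : c * x ^ β₁ ≤ 1 / Ψ r := by
      rw [le_div_iff₀ hΨr, hc]
      have hC₀ : (0:ℝ) < C₁ := by linarith
      have h2 : x ^ β₁ * Ψ r ≤ C₁ * Ψ 1 := by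
        have h3 := mul_le_mul_of_nonneg_left hb hC₀.le
        have h5 : C₁ * (C₁⁻¹ * x ^ β₁ * Ψ r) = x ^ β₁ * Ψ r := by
          field_simp
        linarith
      calc (C₁ * Ψ 1)⁻¹ * x ^ β₁ * Ψ r = (C₁ * Ψ 1)⁻¹ * (x ^ β₁ * Ψ r) := by ring
        _ ≤ (C₁ * Ψ 1)⁻¹ * (C₁ * Ψ 1) := by
            apply mul_le_mul_of_nonneg_left h2 (by positivity)
        _ = 1 := by field_simp
    have hsr : s / r = s * x := by rw [hxdef]; field_simp
    have hy := young_aux hβ₁ hs hcpos hx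
    have : s / r - 1 / Ψ r ≤ s * x - c * x ^ β₁ := by rw [hsr]; linarith
    linarith

omit hβ₁ hC₁ hpos hreg in
lemma phi_mem {s r : ℝ} (hr : 0 < r) :
    s / r - 1 / Ψ r ∈ {v | ∃ r > (0 : ℝ), v = s / r - 1 / Ψ r} := ⟨r, hr, rfl⟩

lemma phi_le {s v : ℝ} (hs : 0 < s) (hv : v ∈ {v | ∃ r > (0 : ℝ), v = s / r - 1 / Ψ r}) :
    v ≤ PhiOf Ψ s :=
  le_csSup (phi_bdd hβ₁ hC₁ hpos hreg hs) hv

lemma phi_pos {s : ℝ} (hs : 0 < s) : 0 < PhiOf Ψ s := by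
  have hΨ1 : 0 < Ψ 1 := hpos 1 one_pos
  have hβ1 : (0:ℝ) < β₁ - 1 := by linarith
  set K : ℝ := C₁ / (s * Ψ 1) with hK
  have hKpos : 0 < K := by positivity
  set R : ℝ := max 1 ((2 * K) ^ (1 / (β₁ - 1))) with hR
  have hR1 : 1 ≤ R := le_max_left _ _
  have hRpos : 0 < R := by linarith
  have hRK : K < R ^ (β₁ - 1) := by
    rcases le_or_gt (2 * K) 1 with h | h
    · calc K < 2 * K := by linarith
        _ ≤ 1 := h
        _ ≤ R ^ (β₁ - 1) := Real.one_le_rpow hR1 hβ1.le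
    · have h2 : (2 * K) ^ (1 / (β₁ - 1)) ≤ R := le_max_right _ _
      have h3 : ((2 * K) ^ (1 / (β₁ - 1))) ^ (β₁ - 1) ≤ R ^ (β₁ - 1) :=
        Real.rpow_le_rpow (by positivity) h2 hβ1.le
      rw [← Real.rpow_mul (by positivity), one_div, inv_mul_cancel₀ hβ1.ne',
        Real.rpow_one] at h3
      linarith
  have hΨR : 0 < Ψ R := hpos R hRpos
  have hb := (hreg 1 R one_pos hR1).1
  rw [le_div_iff₀ hΨ1, div_one] at hb
  -- Ψ R ≥ C₁⁻¹ R^β₁ Ψ 1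
  have hΨRge : C₁⁻¹ * R ^ β₁ * Ψ 1 ≤ Ψ R := hb
  have hRβ : R ^ β₁ = R ^ (β₁ - 1) * R := by
    have h := Real.rpow_add hRpos (β₁ - 1) 1
    rw [Real.rpow_one, sub_add_cancel] at h
    exact h
  have hCpos : (0:ℝ) < C₁ := by linarith
  have key : R < s * Ψ R := by
    have h6 : s * (C₁⁻¹ * R ^ β₁ * Ψ 1) = (s * Ψ 1 / C₁) * (R ^ (β₁ - 1) * R) := by
      rw [hRβ]; field_simp
    have h7 : R < (s * Ψ 1 / C₁) * (R ^ (β₁ - 1) * R) := by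
      have h8 : s * Ψ 1 / C₁ = 1 / K := by rw [hK]; field_simp
      rw [h8]
      have h9 : 1 * R < (1 / K) * (R ^ (β₁ - 1) * R) := by
        rw [one_mul, div_mul_eq_mul_div, one_mul, lt_div_iff₀ hKpos]
        have := mul_lt_mul_of_pos_right hRK hRpos
        linarith [this]
      linarith
    nlinarith [mul_le_mul_of_nonneg_left hΨRge hs.le]
  have hval : 0 < s / R - 1 / Ψ R := by
    rw [sub_pos, div_lt_div_iff₀ hΨR hRpos]
    linarith
  calc (0:ℝ) < s / R - 1 / Ψ R := hval
    _ ≤ PhiOf Ψ s := phi_le hβ₁ hC₁ hpos hreg hs (phi_mem hRpos)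

lemma phi_mono {s S : ℝ} (hs : 0 < s) (hsS : s ≤ S) : PhiOf Ψ s ≤ PhiOf Ψ S := by
  apply csSup_le ⟨s / 1 - 1 / Ψ 1, phi_mem one_pos⟩
  rintro v ⟨r, hr, rfl⟩
  have : s / r - 1 / Ψ r ≤ S / r - 1 / Ψ r := by gcongr
  exact this.trans (phi_le hβ₁ hC₁ hpos hreg (lt_of_lt_of_le hs hsS) (phi_mem hr))

lemma phi_upper {s S : ℝ} (hs : 0 < s) (hsS : s ≤ S) :
    PhiOf Ψ S ≤ C₁ ^ (1 / (β₁ - 1)) * (S / s) ^ (β₁ / (β₁ - 1)) * PhiOf Ψ s := by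
  have hC₀ : (0:ℝ) < C₁ := by linarith
  have hS : 0 < S := lt_of_lt_of_le hs hsS
  have hβ1 : (0:ℝ) < β₁ - 1 := by linarith
  set γ : ℝ := 1 / (β₁ - 1) with hγdef
  have hγ : 0 < γ := by positivity
  set a : ℝ := s / (C₁ * S) with hadef
  have ha : 0 < a := by positivity
  have ha1 : a < 1 := by
    rw [hadef, div_lt_one (by positivity)]
    nlinarith
  set θ : ℝ := a ^ γ with hθdef
  have hθ : 0 < θ := Real.rpow_pos_of_pos ha _
  have hθ1 : θ < 1 := Real.rpow_lt_one ha.le ha1 hγ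
  have hθpow : θ ^ (β₁ - 1) = a := by
    rw [hθdef, ← Real.rpow_mul ha.le, hγdef, one_div, inv_mul_cancel₀ hβ1.ne',
      Real.rpow_one]
  set e : ℝ := β₁ / (β₁ - 1) with hedef
  have hθnegβ : θ ^ (-β₁) = C₁ ^ e * (S / s) ^ e := by
    rw [hθdef, ← Real.rpow_mul ha.le]
    have h1 : γ * (-β₁) = -e := by rw [hγdef, hedef]; field_simp
    rw [h1, Real.rpow_neg ha.le, ← Real.inv_rpow ha.le]
    have h2 : a⁻¹ = C₁ * (S / s) := by rw [hadef]; field_simp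
    rw [h2, Real.mul_rpow hC₀.le (by positivity)]
  set b : ℝ := C₁⁻¹ * θ ^ (-β₁) with hbdef
  have hb : 0 < b := by positivity
  have hbval : b = C₁ ^ (1 / (β₁ - 1)) * (S / s) ^ e := by
    rw [hbdef, hθnegβ, ← mul_assoc]
    congr 1
    rw [← Real.rpow_neg_one C₁, ← Real.rpow_add hC₀]
    congr 1
    rw [hedef]; field_simp; ring
  have hbsθ : b * s * θ = S := by
    have h1 : θ ^ (-β₁) * θ = (θ ^ (β₁ - 1))⁻¹ := by
      have h2 := Real.rpow_add hθ (-β₁) 1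
      rw [Real.rpow_one] at h2
      rw [← h2, show -β₁ + 1 = -(β₁ - 1) by ring, Real.rpow_neg hθ.le]
    have h3 : b * s * θ = C₁⁻¹ * (θ ^ (-β₁) * θ) * s := by rw [hbdef]; ring
    rw [h3, h1, hθpow, hadef]
    field_simp
  rw [← hbval]
  apply csSup_le ⟨S / 1 - 1 / Ψ 1, phi_mem one_pos⟩
  rintro v ⟨r, hr, rfl⟩
  set u : ℝ := r / θ with hudef
  have hu : 0 < u := by positivity
  have hru : r = θ * u := by rw [hudef]; field_simp
  have hrleu : r ≤ u := by rw [hru]; nlinarith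
  have hΨr : 0 < Ψ r := hpos r hr
  have hΨu : 0 < Ψ u := hpos u hu
  have hur : u / r = θ⁻¹ := by rw [hru]; field_simp
  have hregr := (hreg r u hr hrleu).1
  rw [hur, Real.inv_rpow hθ.le, ← Real.rpow_neg hθ.le] at hregr
  -- hregr : C₁⁻¹ * θ ^ (-β₁) ≤ Ψ u / Ψ r, i.e. b ≤ Ψ u / Ψ r
  have hbΨ : b / Ψ u ≤ 1 / Ψ r := by
    rw [le_div_iff₀ hΨr] at hregr
    rw [div_le_div_iff₀ hΨu hΨr, one_mul]
    calc b * Ψ r = C₁⁻¹ * θ ^ (-β₁) * Ψ r := by rw [hbdef]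
      _ ≤ Ψ u := hregr
  have hSr : S / r = b * (s / u) := by
    rw [← hbsθ, hru]
    field_simp
  have h9 : S / r - 1 / Ψ r ≤ b * (s / u - 1 / Ψ u) := by
    rw [hSr, mul_sub]
    have : b * (1 / Ψ u) = b / Ψ u := by ring
    rw [this]
    linarith
  calc S / r - 1 / Ψ r ≤ b * (s / u - 1 / Ψ u) := h9
    _ ≤ b * PhiOf Ψ s := by
        apply mul_le_mul_of_nonneg_left _ hb.le
        exact phi_le hβ₁ hC₁ hpos hreg hs (phi_mem hu)

include hβ in
lemma phi_lower {s S : ℝ} (hs : 0 < s) (hsS : C₁ * s ≤ S) :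
    C₁ ^ (-(1 / (β₂ - 1))) * (S / s) ^ (β₂ / (β₂ - 1)) * PhiOf Ψ s ≤ PhiOf Ψ S := by
  have hC₀ : (0:ℝ) < C₁ := by linarith
  have hβ₂ : 1 < β₂ := lt_of_lt_of_le hβ₁ hβ
  have hS : 0 < S := lt_of_lt_of_le (by positivity) hsS
  have hβ2 : (0:ℝ) < β₂ - 1 := by linarith
  set γ : ℝ := 1 / (β₂ - 1) with hγdef
  have hγ : 0 < γ := by positivity
  set a : ℝ := C₁ * s / S with hadef
  have ha : 0 < a := by positivity
  have ha1 : a ≤ 1 := by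
    rw [hadef, div_le_one hS]; exact hsS
  set θ : ℝ := a ^ γ with hθdef
  have hθ : 0 < θ := Real.rpow_pos_of_pos ha _
  have hθ1 : θ ≤ 1 := Real.rpow_le_one ha.le ha1 hγ.le
  have hθpow : θ ^ (β₂ - 1) = a := by
    rw [hθdef, ← Real.rpow_mul ha.le, hγdef, one_div, inv_mul_cancel₀ hβ2.ne',
      Real.rpow_one]
  set e : ℝ := β₂ / (β₂ - 1) with hedef
  have hθnegβ : θ ^ (-β₂) = C₁ ^ (-e) * (S / s) ^ e := by
    rw [hθdef, ← Real.rpow_mul ha.le]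
    have h1 : γ * (-β₂) = -e := by rw [hγdef, hedef]; field_simp
    rw [h1, Real.rpow_neg ha.le, ← Real.inv_rpow ha.le]
    have h2 : a⁻¹ = C₁⁻¹ * (S / s) := by rw [hadef]; field_simp
    rw [h2, Real.mul_rpow (by positivity) (by positivity), ← Real.rpow_neg_one C₁,
      ← Real.rpow_mul hC₀.le]
    congr 2
    ring
  set b : ℝ := C₁ * θ ^ (-β₂) with hbdef
  have hb : 0 < b := by positivity
  have hbval : b = C₁ ^ (-(1 / (β₂ - 1))) * (S / s) ^ e := by
    rw [hbdef, hθnegβ, ← mul_assoc]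
    congr 1
    have h4 : C₁ * C₁ ^ (-e) = C₁ ^ (1 + -e) := by
      rw [Real.rpow_add hC₀, Real.rpow_one]
    rw [h4]
    congr 1
    rw [hedef]; field_simp; ring
  have hbsθ : b * s * θ = S := by
    have h1 : θ ^ (-β₂) * θ = (θ ^ (β₂ - 1))⁻¹ := by
      have h2 := Real.rpow_add hθ (-β₂) 1
      rw [Real.rpow_one] at h2
      rw [← h2, show -β₂ + 1 = -(β₂ - 1) by ring, Real.rpow_neg hθ.le]
    have h3 : b * s * θ = C₁ * (θ ^ (-β₂) * θ) * s := by rw [hbdef]; ring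
    rw [h3, h1, hθpow, hadef]
    field_simp
  rw [← hbval]
  rw [show b * PhiOf Ψ s ≤ PhiOf Ψ S ↔ PhiOf Ψ s ≤ PhiOf Ψ S / b from
    (le_div_iff₀' hb).symm]
  apply csSup_le ⟨s / 1 - 1 / Ψ 1, phi_mem one_pos⟩
  rintro v ⟨u, hu, rfl⟩
  rw [le_div_iff₀' hb]
  set r : ℝ := θ * u with hrdef
  have hr : 0 < r := by positivity
  have hrleu : r ≤ u := by rw [hrdef]; nlinarith
  have hΨr : 0 < Ψ r := hpos r hr
  have hΨu : 0 < Ψ u := hpos u hu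
  have hur : u / r = θ⁻¹ := by rw [hrdef]; field_simp
  have hregr := (hreg r u hr hrleu).2
  rw [hur, Real.inv_rpow hθ.le, ← Real.rpow_neg hθ.le] at hregr
  -- hregr : Ψ u / Ψ r ≤ C₁ * θ ^ (-β₂) = b
  have hbΨ : 1 / Ψ r ≤ b / Ψ u := by
    rw [div_le_iff₀ hΨr] at hregr
    rw [div_le_div_iff₀ hΨr hΨu, one_mul]
    calc Ψ u ≤ C₁ * θ ^ (-β₂) * Ψ r := hregr
      _ = b * Ψ r := by rw [hbdef]
  have hSr : S / r = b * (s / u) := by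
    rw [← hbsθ, hrdef]
    field_simp
  have h9 : b * (s / u - 1 / Ψ u) ≤ S / r - 1 / Ψ r := by
    rw [hSr, mul_sub]
    have : b * (1 / Ψ u) = b / Ψ u := by ring
    rw [this]
    linarith
  calc b * (s / u - 1 / Ψ u) ≤ S / r - 1 / Ψ r := h9
    _ ≤ PhiOf Ψ S := phi_le hβ₁ hC₁ hpos hreg hS (phi_mem hr)

include hβ in
theorem main (s S : ℝ) (hs : 0 < s) (hsS : s ≤ S) :
    (C₁ ^ (β₂ / (β₂ - 1)) + C₁ ^ (1 / (β₁ - 1)))⁻¹ * (S / s) ^ (β₂ / (β₂ - 1))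
        ≤ PhiOf Ψ S / PhiOf Ψ s ∧
    PhiOf Ψ S / PhiOf Ψ s
        ≤ (C₁ ^ (β₂ / (β₂ - 1)) + C₁ ^ (1 / (β₁ - 1))) * (S / s) ^ (β₁ / (β₁ - 1)) := by
  have hC₀ : (0:ℝ) < C₁ := by linarith
  have hβ₂ : 1 < β₂ := lt_of_lt_of_le hβ₁ hβ
  have hβ1 : (0:ℝ) < β₁ - 1 := by linarith
  have hβ2 : (0:ℝ) < β₂ - 1 := by linarith
  have hS : 0 < S := lt_of_lt_of_le hs hsS
  set C₂ : ℝ := C₁ ^ (β₂ / (β₂ - 1)) + C₁ ^ (1 / (β₁ - 1)) with hC₂def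
  have hC₂ : 0 < C₂ := by positivity
  have hΦs : 0 < PhiOf Ψ s := phi_pos hβ₁ hC₁ hpos hreg hs
  have hΦS : 0 < PhiOf Ψ S := phi_pos hβ₁ hC₁ hpos hreg hS
  have hSs : 0 < S / s := by positivity
  constructor
  · -- lower bound
    rw [le_div_iff₀ hΦs]
    rcases le_or_gt (C₁ * s) S with hcase | hcase
    · have hlow := phi_lower hβ₁ hβ hC₁ hpos hreg hs hcase
      have h1 : C₂⁻¹ ≤ C₁ ^ (-(1 / (β₂ - 1))) := by
        rw [Real.rpow_neg hC₀.le]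
        apply inv_anti₀ (by positivity)
        calc C₁ ^ (1 / (β₂ - 1)) ≤ C₁ ^ (β₂ / (β₂ - 1)) := by
              apply Real.rpow_le_rpow_of_exponent_le hC₁.le
              rw [div_le_div_iff₀ hβ2 hβ2]
              nlinarith
          _ ≤ C₂ := by
              rw [hC₂def]
              have : (0:ℝ) < C₁ ^ (1 / (β₁ - 1)) := by positivity
              linarith
      calc C₂⁻¹ * (S / s) ^ (β₂ / (β₂ - 1)) * PhiOf Ψ s
          ≤ C₁ ^ (-(1 / (β₂ - 1))) * (S / s) ^ (β₂ / (β₂ - 1)) * PhiOf Ψ s := by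
            apply mul_le_mul_of_nonneg_right _ hΦs.le
            exact mul_le_mul_of_nonneg_right h1 (by positivity)
        _ ≤ PhiOf Ψ S := hlow
    · -- S < C₁ * s : use monotonicity
      have hmon := phi_mono hβ₁ hC₁ hpos hreg hs hsS
      have h2 : (S / s) ^ (β₂ / (β₂ - 1)) ≤ C₁ ^ (β₂ / (β₂ - 1)) := by
        apply Real.rpow_le_rpow hSs.le _ (by positivity)
        rw [div_le_iff₀ hs]
        nlinarith
      have h3 : C₂⁻¹ * (S / s) ^ (β₂ / (β₂ - 1)) ≤ 1 := by
        rw [inv_mul_le_iff₀ hC₂, mul_one]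
        calc (S / s) ^ (β₂ / (β₂ - 1)) ≤ C₁ ^ (β₂ / (β₂ - 1)) := h2
          _ ≤ C₂ := by
              rw [hC₂def]
              have : (0:ℝ) < C₁ ^ (1 / (β₁ - 1)) := by positivity
              linarith
      calc C₂⁻¹ * (S / s) ^ (β₂ / (β₂ - 1)) * PhiOf Ψ s ≤ 1 * PhiOf Ψ s :=
            mul_le_mul_of_nonneg_right h3 hΦs.le
        _ = PhiOf Ψ s := one_mul _
        _ ≤ PhiOf Ψ S := hmon
  · -- upper bound
    rw [div_le_iff₀ hΦs]
    have hup := phi_upper hβ₁ hC₁ hpos hreg hs hsS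
    calc PhiOf Ψ S ≤ C₁ ^ (1 / (β₁ - 1)) * (S / s) ^ (β₁ / (β₁ - 1)) * PhiOf Ψ s := hup
      _ ≤ C₂ * (S / s) ^ (β₁ / (β₁ - 1)) * PhiOf Ψ s := by
          apply mul_le_mul_of_nonneg_right _ hΦs.le
          apply mul_le_mul_of_nonneg_right _ (by positivity)
          rw [hC₂def]
          have : (0:ℝ) < C₁ ^ (β₂ / (β₂ - 1)) := by positivity
          linarith
end


end Stmt6Aux

theorem stmt_6 (Ψ : ℝ → ℝ) (β₁ β₂ C₁ : ℝ)
    (hβ₁ : 1 < β₁) (hβ : β₁ ≤ β₂) (hC₁ : 1 < C₁)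
    (hpos : ∀ r > (0 : ℝ), 0 < Ψ r)
    (hcont : ContinuousOn Ψ (Set.Ioi 0))
    (hmono : StrictMonoOn Ψ (Set.Ioi 0))
    (hsurj : ∀ t > (0 : ℝ), ∃ r > (0 : ℝ), Ψ r = t)
    (hreg : ∀ r R : ℝ, 0 < r → r ≤ R →
      C₁⁻¹ * (R / r) ^ β₁ ≤ Ψ R / Ψ r ∧ Ψ R / Ψ r ≤ C₁ * (R / r) ^ β₂) :
    ∃ C₂ > (0 : ℝ), ∀ s S : ℝ, 0 < s → s ≤ S →
      C₂⁻¹ * (S / s) ^ (β₂ / (β₂ - 1)) ≤ PhiOf Ψ S / PhiOf Ψ s ∧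
      PhiOf Ψ S / PhiOf Ψ s ≤ C₂ * (S / s) ^ (β₁ / (β₁ - 1)) := by
  refine ⟨C₁ ^ (β₂ / (β₂ - 1)) + C₁ ^ (1 / (β₁ - 1)), ?_, fun s S hs hsS =>
    Stmt6Aux.main hβ₁ hβ hC₁ hpos hreg s S hs hsS⟩
  have hC₀ : (0:ℝ) < C₁ := by linarith
  positivity
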